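/- Let n ≥ 2 and m ≥ 2 be integers and L > 0, R > 0 reals. Set ξ = (√3/2) · R L /(m+1)^{3/2} and define f_C : ℝ^m → ℝ by f_C(x) = (L/(4n)) ( Σ_{l=1}^{m−1} (x_l − x_{l+1})² + x_m² ) − (ξ/n) x_1. Then: (i) the unique global minimizer of f_C over ℝ^m is x* with coordinates x*_i = (2ξ/L)(m + 1 − i) for i = 1, …, m; (ii) f_C(x*) = − m ξ²/(n L) and ‖x*‖ ≤ R; (iii) for every 1 ≤ k ≤ m, inf{ f_C(x) : x ∈ F_k, ‖x‖ ≤ R } − inf{ f_C(x) : ‖x‖ ≤ R } = ξ² (m − k)/(n L). -/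

import Mathlib

open Finset

open scoped BigOperators

private def Xext (m : ℕ) (x : EuclideanSpace ℝ (Fin m)) (i : ℕ) : ℝ :=
  if h : i < m then x ⟨i, h⟩ else 0

private lemma Xext_lt {m : ℕ} (x : EuclideanSpace ℝ (Fin m)) {i : ℕ} (h : i < m) :
    Xext m x i = x ⟨i, h⟩ := dif_pos h

private lemma Xext_ge {m : ℕ} (x : EuclideanSpace ℝ (Fin m)) {i : ℕ} (h : m ≤ i) :
    Xext m x i = 0 := dif_neg (by omega)

private def dk (k : ℕ) (c : ℝ) (i : ℕ) : ℝ := if i < k then c * ((k : ℝ) - i) else 0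

private def pk (m k : ℕ) (c : ℝ) : EuclideanSpace ℝ (Fin m) :=
  WithLp.toLp 2 (fun i : Fin m => dk k c i.val)

private lemma sumsq_bound (m : ℕ) :
    ∑ i ∈ range m, ((i : ℝ) + 1) ^ 2 ≤ ((m : ℝ) + 1) ^ 3 / 3 := by
  induction m with
  | zero => norm_num
  | succ m ih =>
      rw [Finset.sum_range_succ]
      push_cast
      push_cast at ih
      nlinarith [ih, Nat.cast_nonneg (α := ℝ) m]

private lemma sumsq_zero (m : ℕ) (hm : 1 ≤ m) (u : ℕ → ℝ)
    (h : ((∑ l ∈ range (m - 1), (u l - u (l + 1)) ^ 2) + u (m - 1) ^ 2) = 0) :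
    ∀ i, i < m → u i = 0 := by
  have h1 : ∑ l ∈ range (m - 1), (u l - u (l + 1)) ^ 2 = 0 := by
    nlinarith [Finset.sum_nonneg (fun l (_ : l ∈ range (m-1)) => sq_nonneg (u l - u (l+1))),
      sq_nonneg (u (m-1))]
  have hlast : u (m - 1) = 0 := by
    have : u (m-1) ^ 2 = 0 := by linarith
    exact pow_eq_zero_iff two_ne_zero |>.mp this
  have hstep : ∀ l, l < m - 1 → u l = u (l + 1) := by
    intro l hl
    have := (Finset.sum_eq_zero_iff_of_nonneg
      (fun l _ => sq_nonneg (u l - u (l+1)))).mp h1 l (mem_range.mpr hl)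
    have := pow_eq_zero_iff two_ne_zero |>.mp this
    linarith
  have main : ∀ j i, i + j = m - 1 → u i = 0 := by
    intro j
    induction j with
    | zero =>
        intro i hi
        have : i = m - 1 := by omega
        rw [this]; exact hlast
    | succ j ih =>
        intro i hi
        rw [hstep i (by omega)]
        exact ih (i + 1) (by omega)
  intro i him
  exact main (m - 1 - i) i (by omega)

private lemma telescope_ident (m k : ℕ) (hm : 1 ≤ m) (hk : 1 ≤ k) (hkm : k ≤ m)
    (c : ℝ) (u d : ℕ → ℝ)
    (hd : ∀ i, d i = if i < k then c * ((k : ℝ) - i) else 0)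
    (huk : k = m ∨ u k = 0) :
    ((∑ l ∈ range (m - 1), (u l - u (l + 1)) ^ 2) + u (m - 1) ^ 2)
      = ((∑ l ∈ range (m - 1), ((u l - d l) - (u (l + 1) - d (l + 1))) ^ 2)
          + (u (m - 1) - d (m - 1)) ^ 2)
        + 2 * c * u 0 - (k : ℝ) * c ^ 2 := by
  have he : ∀ l, d l - d (l + 1) = if l < k then c else 0 := by
    intro l
    by_cases h1 : l + 1 < k
    · have h2 : l < k := by omega
      rw [hd, hd, if_pos h1, if_pos h2, if_pos h2]
      push_cast; ring
    · by_cases h2 : l < k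
      · have hkl : k = l + 1 := by omega
        rw [hd, hd, if_neg h1, if_pos h2, if_pos h2, hkl]
        push_cast; ring
      · rw [hd, hd, if_neg h1, if_neg h2, if_neg h2]; ring
  have hsplit : (∑ l ∈ range (m - 1), (u l - u (l + 1)) ^ 2)
      = (∑ l ∈ range (m - 1), ((u l - d l) - (u (l + 1) - d (l + 1))) ^ 2)
        + ∑ l ∈ range (m - 1),
            (d l - d (l + 1)) * (2 * (u l - u (l + 1)) - (d l - d (l + 1))) := by
    rw [← Finset.sum_add_distrib]
    exact Finset.sum_congr rfl fun l _ => by ring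
  have hE : (∑ l ∈ range (m - 1),
        (d l - d (l + 1)) * (2 * (u l - u (l + 1)) - (d l - d (l + 1))))
      = ∑ l ∈ range (m - 1),
          (if l < k then c * (2 * (u l - u (l + 1)) - c) else 0) := by
    refine Finset.sum_congr rfl fun l _ => ?_
    rw [he l]
    by_cases h : l < k <;> simp [h]
  have htel : ∀ N : ℕ, ∑ l ∈ range N, (u l - u (l + 1)) = u 0 - u N :=
    fun N => Finset.sum_range_sub' u N
  have hconst : ∀ N : ℕ, (∑ l ∈ range N, c * (2 * (u l - u (l + 1)) - c))
      = 2 * c * (u 0 - u N) - (N : ℝ) * c ^ 2 := by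
    intro N
    rw [Finset.sum_congr rfl (fun l _ => by ring :
      ∀ l ∈ range N, c * (2 * (u l - u (l + 1)) - c)
        = 2 * c * (u l - u (l + 1)) - c ^ 2)]
    rw [Finset.sum_sub_distrib, ← Finset.mul_sum, htel, Finset.sum_const,
      card_range, nsmul_eq_mul]
  by_cases hkm' : k = m
  · subst hkm'
    have hEk : (∑ l ∈ range (k - 1),
        (if l < k then c * (2 * (u l - u (l + 1)) - c) else 0))
        = ∑ l ∈ range (k - 1), c * (2 * (u l - u (l + 1)) - c) :=
      Finset.sum_congr rfl fun l hl => if_pos (by have := mem_range.mp hl; omega)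
    have hdm : d (k - 1) = c := by
      rw [hd, if_pos (by omega : k - 1 < k)]
      have : ((k - 1 : ℕ) : ℝ) = (k : ℝ) - 1 := by
        push_cast [Nat.cast_sub hk]; ring
      rw [this]; ring
    rw [hsplit, hE, hEk, hconst, hdm]
    have hcast : ((k - 1 : ℕ) : ℝ) = (k : ℝ) - 1 := by push_cast [Nat.cast_sub hk]; ring
    rw [hcast]; ring
  · have huk0 : u k = 0 := huk.resolve_left hkm'
    have hkle : k ≤ m - 1 := by omega
    have hEk : (∑ l ∈ range (m - 1),
        (if l < k then c * (2 * (u l - u (l + 1)) - c) else 0))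
        = ∑ l ∈ range k, c * (2 * (u l - u (l + 1)) - c) := by
      rw [← Finset.sum_subset (Finset.range_subset_range.mpr hkle)
        (fun x _ hx => if_neg (by simpa using hx))]
      exact Finset.sum_congr rfl fun l hl => if_pos (mem_range.mp hl)
    have hdm : d (m - 1) = 0 := by rw [hd]; exact if_neg (by omega)
    rw [hsplit, hE, hEk, hconst, hdm, huk0]
    ring

/-- `F_k = span{e_1, …, e_k} ⊆ ℝ^m` (so `F_0 = {0}`). -/
def Fspan (m k : ℕ) : Submodule ℝ (EuclideanSpace ℝ (Fin m)) :=
  Submodule.span ℝ {v | ∃ j : Fin m, (j : ℕ) < k ∧ v = EuclideanSpace.single j 1}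

/-- The convex hard instance `f_C` with `ξ = (√3/2)RL/(m+1)^{3/2}`:
(i) its unique global minimizer is `x*` with `x*_i = (2ξ/L)(m+1−i)`;
(ii) `f_C(x*) = −mξ²/(nL)` and `‖x*‖ ≤ R`;
(iii) for `1 ≤ k ≤ m`,
`inf{f_C(x) : x ∈ F_k, ‖x‖ ≤ R} − inf{f_C(x) : ‖x‖ ≤ R} = ξ²(m−k)/(nL)`. -/
theorem fC_minimizer_and_gap
    (n m : ℕ) (hn : 2 ≤ n) (hm : 2 ≤ m)
    (L R : ℝ) (hL : 0 < L) (hR : 0 < R)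
    (ξ : ℝ) (hξ : ξ = (Real.sqrt 3 / 2) * R * L / ((m : ℝ) + 1) ^ ((3 : ℝ) / 2))
    (f : EuclideanSpace ℝ (Fin m) → ℝ)
    (hf : ∀ x, f x =
      (L / (4 * n)) *
        ((∑ l : Fin (m - 1),
            (x (Fin.castLE (by omega) l) - x (Fin.cast (by omega : m - 1 + 1 = m) l.succ)) ^ 2)
          + (x ⟨m - 1, by omega⟩) ^ 2)
      - (ξ / n) * x ⟨0, by omega⟩)
    (xs : EuclideanSpace ℝ (Fin m))
    (hxs : ∀ i : Fin m, xs i = (2 * ξ / L) * ((m : ℝ) + 1 - ((i : ℕ) + 1))) :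
    ((∀ x, f xs ≤ f x) ∧ (∀ x, (∀ w, f x ≤ f w) → x = xs)) ∧
    (f xs = -(m * ξ ^ 2 / (n * L)) ∧ ‖xs‖ ≤ R) ∧
    (∀ k : ℕ, 1 ≤ k → k ≤ m →
      sInf (f '' {x | x ∈ Fspan m k ∧ ‖x‖ ≤ R}) - sInf (f '' {x | ‖x‖ ≤ R})
        = ξ ^ 2 * ((m : ℝ) - k) / (n * L)) := by
  have hn0 : (0 : ℝ) < (n : ℝ) := by positivity
  have hL0 : L ≠ 0 := hL.ne'
  set c : ℝ := 2 * ξ / L with hc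
  -- f in terms of Xext
  have hfX : ∀ x : EuclideanSpace ℝ (Fin m), f x
      = L / (4 * n) * ((∑ l ∈ range (m - 1), (Xext m x l - Xext m x (l + 1)) ^ 2)
          + Xext m x (m - 1) ^ 2)
        - ξ / n * Xext m x 0 := by
    intro x
    rw [hf x]
    have h1 : (∑ l : Fin (m - 1),
        (x (Fin.castLE (by omega) l) - x (Fin.cast (by omega : m - 1 + 1 = m) l.succ)) ^ 2)
        = ∑ l ∈ range (m - 1), (Xext m x l - Xext m x (l + 1)) ^ 2 := by
      rw [← Fin.sum_univ_eq_sum_range (fun l => (Xext m x l - Xext m x (l + 1)) ^ 2) (m - 1)]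
      refine Finset.sum_congr rfl fun l _ => ?_
      have hl1 : (l : ℕ) < m := by omega
      have hl2 : (l : ℕ) + 1 < m := by omega
      have e1 : (Fin.castLE (show m - 1 ≤ m by omega) l) = ⟨(l : ℕ), hl1⟩ :=
        Fin.ext (by simp)
      have e2 : (Fin.cast (show m - 1 + 1 = m by omega) l.succ) = ⟨(l : ℕ) + 1, hl2⟩ :=
        Fin.ext (by simp)
      rw [Xext_lt x hl1, Xext_lt x hl2, e1, e2]
    rw [h1, Xext_lt x (by omega : m - 1 < m), Xext_lt x (by omega : 0 < m)]
  -- the key completion-of-squares identity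
  have key : ∀ k : ℕ, 1 ≤ k → k ≤ m → ∀ x : EuclideanSpace ℝ (Fin m),
      (k = m ∨ Xext m x k = 0) →
      f x = -((k : ℝ) * ξ ^ 2 / ((n : ℝ) * L))
        + L / (4 * (n : ℝ)) * ((∑ l ∈ range (m - 1),
            ((Xext m x l - dk k c l) - (Xext m x (l + 1) - dk k c (l + 1))) ^ 2)
          + (Xext m x (m - 1) - dk k c (m - 1)) ^ 2) := by
    intro k hk hkm x hcond
    rw [hfX x,
      telescope_ident m k (by omega) hk hkm c (Xext m x) (dk k c) (fun i => rfl) hcond]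
    rw [hc]
    field_simp
    ring
  have hQnonneg : ∀ k : ℕ, ∀ x : EuclideanSpace ℝ (Fin m),
      0 ≤ (∑ l ∈ range (m - 1),
            ((Xext m x l - dk k c l) - (Xext m x (l + 1) - dk k c (l + 1))) ^ 2)
          + (Xext m x (m - 1) - dk k c (m - 1)) ^ 2 := by
    intro k x
    have := Finset.sum_nonneg (fun l (_ : l ∈ range (m-1)) =>
      sq_nonneg ((Xext m x l - dk k c l) - (Xext m x (l + 1) - dk k c (l + 1))))
    nlinarith [sq_nonneg (Xext m x (m - 1) - dk k c (m - 1))]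
  have hlow : ∀ k : ℕ, 1 ≤ k → k ≤ m → ∀ x : EuclideanSpace ℝ (Fin m),
      (k = m ∨ Xext m x k = 0) → -((k : ℝ) * ξ ^ 2 / ((n : ℝ) * L)) ≤ f x := by
    intro k hk hkm x hcond
    rw [key k hk hkm x hcond]
    have h1 := hQnonneg k x
    have h2 : (0:ℝ) ≤ L / (4 * (n : ℝ)) := by positivity
    nlinarith
  -- xs = pk m m c
  have hxspm : xs = pk m m c := by
    ext i
    rw [hxs i]
    show _ = dk m c i.val
    rw [dk, if_pos i.isLt]
    push_cast
    ring
  have hXp : ∀ k : ℕ, k ≤ m → ∀ i : ℕ, Xext m (pk m k c) i = dk k c i := by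
    intro k hkm i
    by_cases h : i < m
    · rw [Xext_lt _ h]; rfl
    · rw [Xext_ge _ (by omega), dk, if_neg (by omega)]
  have hfp : ∀ k : ℕ, 1 ≤ k → k ≤ m →
      f (pk m k c) = -((k : ℝ) * ξ ^ 2 / ((n : ℝ) * L)) := by
    intro k hk hkm
    have hcond : k = m ∨ Xext m (pk m k c) k = 0 := by
      right; rw [hXp k hkm, dk, if_neg (lt_irrefl k)]
    rw [key k hk hkm _ hcond]
    have hz : (∑ l ∈ range (m - 1),
        ((Xext m (pk m k c) l - dk k c l) - (Xext m (pk m k c) (l + 1) - dk k c (l + 1))) ^ 2)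
        + (Xext m (pk m k c) (m - 1) - dk k c (m - 1)) ^ 2 = 0 := by
      rw [Finset.sum_eq_zero fun l _ => by rw [hXp k hkm, hXp k hkm]; ring]
      rw [hXp k hkm]; ring
    rw [hz]; ring
  have hfxs : f xs = -((m : ℝ) * ξ ^ 2 / ((n : ℝ) * L)) := by
    rw [hxspm]; exact hfp m (by omega) le_rfl
  -- global minimality
  have hglobal : ∀ x, f xs ≤ f x := by
    intro x
    rw [hfxs]
    exact hlow m (by omega) le_rfl x (Or.inl rfl)
  -- ξ² closed form
  have hb1 : (0:ℝ) < (m : ℝ) + 1 := by positivity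
  have hξ2 : ξ ^ 2 = 3 / 4 * (R ^ 2 * L ^ 2) / ((m : ℝ) + 1) ^ 3 := by
    rw [hξ, div_pow]
    have hnum : ((Real.sqrt 3 / 2) * R * L) ^ 2 = 3 / 4 * (R ^ 2 * L ^ 2) := by
      have h3 : Real.sqrt 3 ^ 2 = 3 := Real.sq_sqrt (by norm_num)
      nlinarith [h3]
    have hden : (((m : ℝ) + 1) ^ ((3 : ℝ) / 2)) ^ 2 = ((m : ℝ) + 1) ^ 3 := by
      rw [← Real.rpow_natCast (((m : ℝ) + 1) ^ ((3 : ℝ) / 2)) 2,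
        ← Real.rpow_mul hb1.le]
      rw [show (3 : ℝ) / 2 * ((2 : ℕ) : ℝ) = ((3 : ℕ) : ℝ) by norm_num]
      exact Real.rpow_natCast _ 3
    rw [hnum, hden]
  -- norm bounds
  have hnormp : ∀ k : ℕ, k ≤ m → ‖pk m k c‖ ≤ R := by
    intro k hkm
    rw [EuclideanSpace.norm_eq]
    have hsum : (∑ i : Fin m, ‖pk m k c i‖ ^ 2) ≤ R ^ 2 := by
      have hterm : ∀ i : Fin m, ‖pk m k c i‖ ^ 2 = dk k c i.val ^ 2 := by
        intro i; rw [Real.norm_eq_abs, sq_abs]; rfl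
      calc (∑ i : Fin m, ‖pk m k c i‖ ^ 2)
          = ∑ i : Fin m, dk k c i.val ^ 2 := Finset.sum_congr rfl fun i _ => hterm i
        _ ≤ ∑ i : Fin m, dk m c i.val ^ 2 := by
            refine Finset.sum_le_sum fun i _ => ?_
            by_cases hik : (i : ℕ) < k
            · rw [dk, dk, if_pos hik, if_pos i.isLt]
              have ha : (0:ℝ) ≤ (k : ℝ) - i := by
                have : (i:ℝ) ≤ (k:ℝ) := by exact_mod_cast hik.le
                linarith
              have hab : (k : ℝ) - i ≤ (m : ℝ) - i := by
                have : (k:ℝ) ≤ (m:ℝ) := by exact_mod_cast hkm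
                linarith
              rw [mul_pow, mul_pow]
              exact mul_le_mul_of_nonneg_left (by nlinarith) (sq_nonneg c)
            · rw [dk, if_neg hik]
              simpa using sq_nonneg (dk m c (i : ℕ))
        _ = ∑ i ∈ range m, dk m c i ^ 2 :=
            Fin.sum_univ_eq_sum_range (fun i => dk m c i ^ 2) m
        _ = ∑ i ∈ range m, c ^ 2 * ((m : ℝ) - i) ^ 2 := by
            refine Finset.sum_congr rfl fun i hi => ?_
            rw [dk, if_pos (mem_range.mp hi)]; ring
        _ = c ^ 2 * ∑ i ∈ range m, ((m : ℝ) - i) ^ 2 := by rw [Finset.mul_sum]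
        _ = c ^ 2 * ∑ i ∈ range m, ((i : ℝ) + 1) ^ 2 := by
            congr 1
            rw [← Finset.sum_range_reflect (fun j => ((j : ℝ) + 1) ^ 2) m]
            refine Finset.sum_congr rfl fun j hj => ?_
            have hj' : j < m := mem_range.mp hj
            have : ((m - 1 - j : ℕ) : ℝ) = (m : ℝ) - 1 - j := by
              have h1 : j ≤ m - 1 := by omega
              push_cast [Nat.cast_sub h1, Nat.cast_sub (by omega : 1 ≤ m)]
              ring
            rw [this]; ring
        _ ≤ c ^ 2 * (((m : ℝ) + 1) ^ 3 / 3) := by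
            exact mul_le_mul_of_nonneg_left (sumsq_bound m) (sq_nonneg c)
        _ = R ^ 2 := by
            have hcc : c ^ 2 = 4 * ξ ^ 2 / L ^ 2 := by rw [hc]; ring
            rw [hcc, hξ2]
            field_simp
    calc Real.sqrt (∑ i : Fin m, ‖pk m k c i‖ ^ 2) ≤ Real.sqrt (R ^ 2) :=
          Real.sqrt_le_sqrt hsum
      _ = R := Real.sqrt_sq hR.le
  have hnormxs : ‖xs‖ ≤ R := by rw [hxspm]; exact hnormp m le_rfl
  -- uniqueness
  have huniq : ∀ x, (∀ w, f x ≤ f w) → x = xs := by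
    intro x hx
    have h1 : f x ≤ f xs := hx xs
    have h2 := key m (by omega) le_rfl x (Or.inl rfl)
    have h3 := hQnonneg m x
    have h4 : (0:ℝ) < L / (4 * (n : ℝ)) := by positivity
    have hQ0 : (∑ l ∈ range (m - 1),
        ((Xext m x l - dk m c l) - (Xext m x (l + 1) - dk m c (l + 1))) ^ 2)
        + (Xext m x (m - 1) - dk m c (m - 1)) ^ 2 = 0 := by
      set Q := (∑ l ∈ range (m - 1),
        ((Xext m x l - dk m c l) - (Xext m x (l + 1) - dk m c (l + 1))) ^ 2)
        + (Xext m x (m - 1) - dk m c (m - 1)) ^ 2 with hQdef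
      rw [hfxs] at h1
      have h5 : L / (4 * (n : ℝ)) * Q ≤ 0 := by linarith
      have h6 : 0 ≤ L / (4 * (n : ℝ)) * Q := mul_nonneg h4.le h3
      have h7 : L / (4 * (n : ℝ)) * Q = 0 := le_antisymm h5 h6
      exact (mul_eq_zero.mp h7).resolve_left h4.ne'
    have hcoord := sumsq_zero m (by omega) (fun i => Xext m x i - dk m c i) hQ0
    ext i
    have hi : Xext m x i.val - dk m c i.val = 0 := hcoord i.val i.isLt
    have : Xext m x i.val = dk m c i.val := by linarith
    rw [Xext_lt x i.isLt] at this
    rw [hxspm]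
    show x i = dk m c i.val
    rw [← this]
  -- membership of pk in Fspan
  have hmemF : ∀ k : ℕ, k ≤ m → pk m k c ∈ Fspan m k := by
    intro k hkm
    have hrep : pk m k c = ∑ i : Fin m, pk m k c i • EuclideanSpace.single i 1 := by
      have := (EuclideanSpace.basisFun (Fin m) ℝ).sum_repr (pk m k c)
      simp [EuclideanSpace.basisFun_apply, EuclideanSpace.basisFun_repr] at this
      exact this.symm
    rw [hrep]
    refine Submodule.sum_mem _ fun i _ => ?_
    by_cases hik : (i : ℕ) < k
    · exact Submodule.smul_mem _ _ (Submodule.subset_span ⟨i, hik, rfl⟩)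
    · have hz : pk m k c i = 0 := by
        show dk k c i.val = 0
        rw [dk, if_neg hik]
      rw [hz, zero_smul]
      exact Submodule.zero_mem _
  -- elements of Fspan vanish at coordinate k
  have hFzero : ∀ k : ℕ, k < m → ∀ x ∈ Fspan m k, Xext m x k = 0 := by
    intro k hkm x hxF
    rw [Xext_lt x hkm]
    induction hxF using Submodule.span_induction with
    | mem v hv =>
        obtain ⟨j, hj, rfl⟩ := hv
        rw [EuclideanSpace.single_apply]
        rw [if_neg]
        intro hEq
        exact absurd hj (by rw [← hEq]; simp)
    | zero => rfl
    | add y z _ _ hy hz => rw [PiLp.add_apply, hy, hz, add_zero]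
    | smul a y _ hy => rw [PiLp.smul_apply, hy, smul_zero]
  -- sInf over full ball
  have hBall : sInf (f '' {x | ‖x‖ ≤ R}) = -((m : ℝ) * ξ ^ 2 / ((n : ℝ) * L)) := by
    refine IsLeast.csInf_eq ⟨⟨xs, hnormxs, hfxs⟩, ?_⟩
    rintro y ⟨x, _, rfl⟩
    exact hlow m (by omega) le_rfl x (Or.inl rfl)
  refine ⟨⟨hglobal, huniq⟩, ⟨hfxs, hnormxs⟩, ?_⟩
  intro k hk hkm
  have hFk : sInf (f '' {x | x ∈ Fspan m k ∧ ‖x‖ ≤ R})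
      = -((k : ℝ) * ξ ^ 2 / ((n : ℝ) * L)) := by
    refine IsLeast.csInf_eq ⟨⟨pk m k c, ⟨hmemF k hkm, hnormp k hkm⟩, hfp k hk hkm⟩, ?_⟩
    rintro y ⟨x, ⟨hxF, _⟩, rfl⟩
    refine hlow k hk hkm x ?_
    by_cases hkm' : k = m
    · exact Or.inl hkm'
    · exact Or.inr (hFzero k (by omega) x hxF)
  rw [hFk, hBall]
  field_simp
  ring
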